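/- arXiv:1304.3645 — 5 statements merged into one kernel-verified Lean document; each statement's English description precedes it below -/
import Mathlib

section
/- Let S = ℚ[α] be a polynomial ring in one variable. The set of triples (f_x, f_y, f_z) ∈ S³ satisfying f_x ≡ f_y ≡ f_z mod α and f_x − 2f_y + f_z ≡ 0 mod α² is a subring of S³, and it is a free S-module of rank 3, with basis (1,1,1), (α, 0, −α), (α², 0, 0). -/
open Polynomial

namespace Stmt9

/-- The GKM congruence conditions on triples over `S = ℚ[α]` (here `α = X`):
`f_x ≡ f_y ≡ f_z mod α` and `f_x − 2 f_y + f_z ≡ 0 mod α²`. -/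
def P3 (f : ℚ[X] × ℚ[X] × ℚ[X]) : Prop :=
  X ∣ f.1 - f.2.1 ∧ X ∣ f.2.1 - f.2.2 ∧ X ^ 2 ∣ f.1 - 2 * f.2.1 + f.2.2

/-- The set of triples `(f_x, f_y, f_z) ∈ S³` with `f_x ≡ f_y ≡ f_z mod α` and
`f_x − 2f_y + f_z ≡ 0 mod α²` is a subring of `S³` and a free `S`-module of rank 3
with basis `(1,1,1)`, `(α,0,−α)`, `(α²,0,0)`. -/
theorem congruence_triples_subring_and_free :
    -- subring conditions
    P3 (1, 1, 1) ∧
    (∀ a b, P3 a → P3 b → P3 (a + b)) ∧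
    (∀ a, P3 a → P3 (-a)) ∧
    (∀ a b, P3 a → P3 b → P3 (a * b)) ∧
    -- `S`-submodule condition
    (∀ (c : ℚ[X]) a, P3 a → P3 (c • a)) ∧
    -- the basis elements satisfy the conditions
    P3 (X, 0, -X) ∧ P3 (X ^ 2, 0, 0) ∧
    -- free of rank 3 with the given basis
    (∀ f, P3 f → ∃! c : Fin 3 → ℚ[X],
      f = c 0 • ((1, 1, 1) : ℚ[X] × ℚ[X] × ℚ[X]) + c 1 • (X, 0, -X) + c 2 • (X ^ 2, 0, 0)) := by
  refine ⟨?_, ?_, ?_, ?_, ?_, ?_, ?_, ?_⟩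
  · refine ⟨⟨0, by ring⟩, ⟨0, by ring⟩, ⟨0, by ring⟩⟩
  · rintro a b ⟨⟨u1, hu1⟩, ⟨u2, hu2⟩, ⟨u3, hu3⟩⟩ ⟨⟨v1, hv1⟩, ⟨v2, hv2⟩, ⟨v3, hv3⟩⟩
    exact ⟨⟨u1 + v1, by simp only [Prod.fst_add, Prod.snd_add]; linear_combination hu1 + hv1⟩,
      ⟨u2 + v2, by simp only [Prod.fst_add, Prod.snd_add]; linear_combination hu2 + hv2⟩,
      ⟨u3 + v3, by simp only [Prod.fst_add, Prod.snd_add]; linear_combination hu3 + hv3⟩⟩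
  · rintro a ⟨⟨u1, hu1⟩, ⟨u2, hu2⟩, ⟨u3, hu3⟩⟩
    exact ⟨⟨-u1, by simp only [Prod.fst_neg, Prod.snd_neg]; linear_combination -hu1⟩,
      ⟨-u2, by simp only [Prod.fst_neg, Prod.snd_neg]; linear_combination -hu2⟩,
      ⟨-u3, by simp only [Prod.fst_neg, Prod.snd_neg]; linear_combination -hu3⟩⟩
  · rintro a b ⟨⟨u1, hu1⟩, ⟨u2, hu2⟩, ⟨u3, hu3⟩⟩ ⟨⟨v1, hv1⟩, ⟨v2, hv2⟩, ⟨v3, hv3⟩⟩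
    refine ⟨⟨b.1 * u1 + a.2.1 * v1, ?_⟩, ⟨b.2.1 * u2 + a.2.2 * v2, ?_⟩,
      ⟨b.1 * u3 + a.2.1 * v3 + u2 * (v1 + v2), ?_⟩⟩
    · simp only [Prod.fst_mul, Prod.snd_mul]
      linear_combination b.1 * hu1 + a.2.1 * hv1
    · simp only [Prod.fst_mul, Prod.snd_mul]
      linear_combination b.2.1 * hu2 + a.2.2 * hv2
    · simp only [Prod.fst_mul, Prod.snd_mul]
      linear_combination b.1 * hu3 + a.2.1 * hv3 + (X * u2) * hv1 + (X * u2) * hv2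
        + (b.1 - b.2.2) * hu2
  · rintro c a ⟨⟨u1, hu1⟩, ⟨u2, hu2⟩, ⟨u3, hu3⟩⟩
    refine ⟨⟨c * u1, ?_⟩, ⟨c * u2, ?_⟩, ⟨c * u3, ?_⟩⟩
    · simp only [Prod.smul_fst, Prod.smul_snd, smul_eq_mul]
      linear_combination c * hu1
    · simp only [Prod.smul_fst, Prod.smul_snd, smul_eq_mul]
      linear_combination c * hu2
    · simp only [Prod.smul_fst, Prod.smul_snd, smul_eq_mul]
      linear_combination c * hu3
  · exact ⟨⟨1, by ring⟩, ⟨1, by ring⟩, ⟨0, by ring⟩⟩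
  · exact ⟨⟨X, by ring⟩, ⟨0, by ring⟩, ⟨1, by ring⟩⟩
  · rintro f ⟨⟨u1, hu1⟩, ⟨u2, hu2⟩, ⟨u3, hu3⟩⟩
    refine ⟨![f.2.1, u2, u3], ?_, ?_⟩
    · have : f = (f.1, f.2.1, f.2.2) := rfl
      rw [this]
      simp only [Matrix.cons_val_zero, Matrix.cons_val_one, Matrix.head_cons,
        Prod.smul_mk, Prod.mk_add_mk, smul_eq_mul, Matrix.cons_val_two, Matrix.tail_cons]
      refine Prod.ext ?_ (Prod.ext ?_ ?_)
      · show f.1 = _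
        linear_combination hu3 + 2 * hu2 - hu2
      · show f.2.1 = _; ring
      · show f.2.2 = _
        linear_combination -hu2
    · rintro d hd
      have hX : (X : ℚ[X]) ≠ 0 := X_ne_zero
      have h1 : f.1 = d 0 + d 1 * X + d 2 * X ^ 2 := by
        have := congrArg Prod.fst hd
        simpa [smul_eq_mul] using this
      have h2 : f.2.1 = d 0 := by
        have := congrArg (fun p => p.2.1) hd
        simpa [smul_eq_mul] using this
      have h3 : f.2.2 = d 0 - d 1 * X := by
        have := congrArg (fun p => p.2.2) hd
        simp [smul_eq_mul] at this
        linear_combination this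
      have e1 : d 1 * X = u2 * X := by
        linear_combination hu2 - h2 + h3
      have hd1 : d 1 = u2 := mul_right_cancel₀ hX e1
      have e2 : d 2 * X ^ 2 = u3 * X ^ 2 := by
        linear_combination hu3 - h1 + 2 * h2 - h3 - X * e1 + X ^ 2 * hd1
      have hd2 : d 2 = u3 := mul_right_cancel₀ (pow_ne_zero 2 hX) e2
      funext i
      fin_cases i
      · simpa using h2.symm
      · simpa using hd1
      · simpa using hd2
end Stmt9
end

section
/- Let S = ℚ[α]. The set of quadruples (f_x, f_y, f_z, f_t) ∈ S⁴ satisfying f_x ≡ f_y ≡ f_z ≡ f_t mod α and f_x − f_y + f_z − f_t ≡ 0 mod α² is a subring of S⁴ and a free S-module of rank 4. -/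
open Polynomial

namespace Stmt10

/-- The GKM congruence conditions on quadruples over `S = ℚ[α]` (here `α = X`):
`f_x ≡ f_y ≡ f_z ≡ f_t mod α` and `f_x − f_y + f_z − f_t ≡ 0 mod α²`. -/
def P4 (f : ℚ[X] × ℚ[X] × ℚ[X] × ℚ[X]) : Prop :=
  X ∣ f.1 - f.2.1 ∧ X ∣ f.2.1 - f.2.2.1 ∧ X ∣ f.2.2.1 - f.2.2.2 ∧
    X ^ 2 ∣ f.1 - f.2.1 + f.2.2.1 - f.2.2.2

lemma p4_iff (f1 f2 f3 f4 : ℚ[X]) :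
    P4 (f1, f2, f3, f4) ↔
      X ∣ f1 - f2 ∧ X ∣ f2 - f3 ∧ X ∣ f3 - f4 ∧ X ^ 2 ∣ f1 - f2 + f3 - f4 := Iff.rfl

/-- The set of quadruples `(f_x, f_y, f_z, f_t) ∈ S⁴` with
`f_x ≡ f_y ≡ f_z ≡ f_t mod α` and `f_x − f_y + f_z − f_t ≡ 0 mod α²` is a subring of
`S⁴` and a free `S`-module of rank 4. -/
theorem congruence_quadruples_subring_and_free :
    -- subring conditions
    P4 (1, 1, 1, 1) ∧
    (∀ a b, P4 a → P4 b → P4 (a + b)) ∧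
    (∀ a, P4 a → P4 (-a)) ∧
    (∀ a b, P4 a → P4 b → P4 (a * b)) ∧
    -- `S`-submodule condition
    (∀ (c : ℚ[X]) a, P4 a → P4 (c • a)) ∧
    -- free of rank 4
    (∃ b : Fin 4 → ℚ[X] × ℚ[X] × ℚ[X] × ℚ[X],
      (∀ i, P4 (b i)) ∧
      ∀ f, P4 f → ∃! c : Fin 4 → ℚ[X], f = ∑ i, c i • b i) := by
  have hXne : (X : ℚ[X]) ≠ 0 := X_ne_zero
  refine ⟨?_, ?_, ?_, ?_, ?_, ?_⟩
  · simp [P4]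
  · rintro ⟨a1, a2, a3, a4⟩ ⟨b1, b2, b3, b4⟩ ⟨h1, h2, h3, h4⟩ ⟨g1, g2, g3, g4⟩
    refine ⟨?_, ?_, ?_, ?_⟩
    · simpa [Prod.add_def, sub_add_sub_comm] using dvd_add h1 g1
    · simpa [Prod.add_def, sub_add_sub_comm] using dvd_add h2 g2
    · simpa [Prod.add_def, sub_add_sub_comm] using dvd_add h3 g3
    · have := dvd_add h4 g4
      simp only [Prod.add_def, P4]
      convert this using 1
      ring
  · rintro ⟨a1, a2, a3, a4⟩ ⟨h1, h2, h3, h4⟩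
    refine ⟨?_, ?_, ?_, ?_⟩
    · show X ∣ -a1 - -a2
      rw [neg_sub_neg]; exact dvd_sub_comm.mp h1
    · show X ∣ -a2 - -a3
      rw [neg_sub_neg]; exact dvd_sub_comm.mp h2
    · show X ∣ -a3 - -a4
      rw [neg_sub_neg]; exact dvd_sub_comm.mp h3
    · show X ^ 2 ∣ -a1 - -a2 + -a3 - -a4
      have := h4.neg_right
      convert this using 1
      ring
  · rintro ⟨a1, a2, a3, a4⟩ ⟨b1, b2, b3, b4⟩ ⟨h1, h2, h3, h4⟩ ⟨g1, g2, g3, g4⟩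
    have ha13 : X ∣ a1 - a3 := by
      have := dvd_add h1 h2; simpa using this
    have hb24 : X ∣ b2 - b4 := by
      have := dvd_add g2 g3; simpa using this
    refine ⟨?_, ?_, ?_, ?_⟩
    · have : a1 * b1 - a2 * b2 = a1 * (b1 - b2) + (a1 - a2) * b2 := by ring
      simpa [Prod.mul_def, this] using dvd_add (g1.mul_left a1) (h1.mul_right b2)
    · have : a2 * b2 - a3 * b3 = a2 * (b2 - b3) + (a2 - a3) * b3 := by ring
      simpa [Prod.mul_def, this] using dvd_add (g2.mul_left a2) (h2.mul_right b3)
    · have : a3 * b3 - a4 * b4 = a3 * (b3 - b4) + (a3 - a4) * b4 := by ring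
      simpa [Prod.mul_def, this] using dvd_add (g3.mul_left a3) (h3.mul_right b4)
    · have key : a1 * b1 - a2 * b2 + a3 * b3 - a4 * b4 =
          a1 * (b1 - b2 + b3 - b4) + (-(a1 - a3)) * (b3 - b4)
            + (a1 - a2) * (b2 - b4) + (a1 - a2 + a3 - a4) * b4 := by ring
      have d1 : X ^ 2 ∣ a1 * (b1 - b2 + b3 - b4) := g4.mul_left a1
      have d2 : X ^ 2 ∣ (-(a1 - a3)) * (b3 - b4) := by
        rw [sq]; exact mul_dvd_mul ha13.neg_right g3
      have d3 : X ^ 2 ∣ (a1 - a2) * (b2 - b4) := by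
        rw [sq]; exact mul_dvd_mul h1 hb24
      have d4 : X ^ 2 ∣ (a1 - a2 + a3 - a4) * b4 := h4.mul_right b4
      simp only [Prod.mul_def, P4]
      rw [key]
      exact dvd_add (dvd_add (dvd_add d1 d2) d3) d4
  · rintro c ⟨a1, a2, a3, a4⟩ ⟨h1, h2, h3, h4⟩
    have e : ∀ p q : ℚ[X], c * p - c * q = c * (p - q) := fun p q => by ring
    refine ⟨?_, ?_, ?_, ?_⟩
    · simpa [Prod.smul_def, smul_eq_mul, e] using h1.mul_left c
    · simpa [Prod.smul_def, smul_eq_mul, e] using h2.mul_left c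
    · simpa [Prod.smul_def, smul_eq_mul, e] using h3.mul_left c
    · have : c * a1 - c * a2 + c * a3 - c * a4 = c * (a1 - a2 + a3 - a4) := by ring
      simp only [Prod.smul_def, smul_eq_mul, P4]
      rw [this]
      exact h4.mul_left c
  · refine ⟨![(1, 1, 1, 1), (X, 0, 0, X), (X, X, 0, 0), (X ^ 2, 0, 0, 0)], ?_, ?_⟩
    · intro i
      fin_cases i <;> refine ⟨?_, ?_, ?_, ?_⟩ <;> simp [pow_two]
    · rintro ⟨f1, f2, f3, f4⟩ ⟨h1, h2, h3, h4⟩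
      simp only at h1 h2 h3 h4
      obtain ⟨q2, hq2⟩ := h2
      obtain ⟨q3, hq3⟩ := h3
      obtain ⟨q4, hq4⟩ := h4
      have hsum : ∀ c : Fin 4 → ℚ[X],
          ∑ i, c i • ![((1 : ℚ[X]), (1 : ℚ[X]), (1 : ℚ[X]), (1 : ℚ[X])),
            (X, 0, 0, X), (X, X, 0, 0), (X ^ 2, 0, 0, 0)] i =
          (c 0 + c 1 * X + c 2 * X + c 3 * X ^ 2, c 0 + c 2 * X, c 0, c 0 + c 1 * X) := by
        intro c
        simp only [Fin.sum_univ_four, Matrix.cons_val_zero, Matrix.cons_val_one,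
          Matrix.head_cons, Matrix.cons_val_two, Matrix.tail_cons, Matrix.cons_val_three,
          Prod.smul_mk, smul_eq_mul, Prod.mk_add_mk, Prod.mk.injEq]
        refine ⟨by ring, by ring, by ring, by ring⟩
      refine ⟨![f3, -q3, q2, q4], ?_, ?_⟩
      · beta_reduce
        rw [hsum]
        simp only [Prod.mk.injEq, Matrix.cons_val_zero, Matrix.cons_val_one, Matrix.head_cons,
          Matrix.cons_val_two, Matrix.tail_cons, Matrix.cons_val_three]
        refine ⟨?_, ?_, ?_, ?_⟩
        · linear_combination hq2 + hq4 - hq3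
        · linear_combination hq2
        · trivial
        · linear_combination -hq3
      · intro c hc
        rw [hsum] at hc
        simp only [Prod.mk.injEq] at hc
        obtain ⟨e1, e2, e3, e4⟩ := hc
        have hX2ne : (X : ℚ[X]) ^ 2 ≠ 0 := pow_ne_zero 2 hXne
        have hc0 : c 0 = f3 := e3.symm
        have hc2 : c 2 = q2 := by
          have : c 2 * X = q2 * X := by linear_combination -e2 + e3 + hq2
          exact mul_right_cancel₀ hXne this
        have hc1 : c 1 = -q3 := by
          have : c 1 * X = -q3 * X := by linear_combination -e4 + e3 - hq3
          exact mul_right_cancel₀ hXne this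
        have hc3 : c 3 = q4 := by
          have : c 3 * X ^ 2 = q4 * X ^ 2 := by
            linear_combination hq4 - e1 + e2 - e3 + e4
          exact mul_right_cancel₀ hX2ne this
        funext i
        fin_cases i <;> simp [hc0, hc1, hc2, hc3]

end Stmt10
end

section
/- Let R be a ℕ-graded commutative ring with R₀ a field, let W be a finite group acting on R by graded ring automorphisms, and suppose R is free as a module over the invariant ring R^W. Let M be a graded R^W-module, finitely generated, such that M ⊗_{R^W} R is a free R-module. Then M is a free R^W-module. -/
open scoped TensorProduct

namespace Stmt15

/-- The subring of fixed points of a multiplicative semiring action. -/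
def fixedSubring (W R : Type*) [Monoid W] [CommRing R] [MulSemiringAction W R] :
    Subring R where
  carrier := {r | ∀ w : W, w • r = r}
  one_mem' := fun w => smul_one w
  mul_mem' := fun {a b} ha hb w => by rw [smul_mul', ha w, hb w]
  add_mem' := fun {a b} ha hb w => by rw [smul_add, ha w, hb w]
  zero_mem' := fun w => smul_zero w
  neg_mem' := fun {a} ha w => by rw [smul_neg, ha w]

set_option linter.unusedSectionVars false
attribute [local instance] Classical.propDecidable

section Aux

variable {R : Type*} [CommRing R] (𝒜 : ℕ → AddSubgroup R) [GradedRing 𝒜]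

section Fixed

variable {W : Type*} [Monoid W] [MulSemiringAction W R]

theorem smul_decompose (hgraded : ∀ (w : W) (i : ℕ), ∀ x ∈ 𝒜 i, w • x ∈ 𝒜 i)
    (w : W) (r : R) (i : ℕ) :
    w • (DirectSum.decompose 𝒜 r i : R) = DirectSum.decompose 𝒜 (w • r) i := by
  induction r using DirectSum.Decomposition.inductionOn 𝒜 with
  | zero => simp
  | @homogeneous j x =>
      obtain ⟨x, hx⟩ := x
      rcases eq_or_ne i j with rfl | hij
      · rw [DirectSum.decompose_of_mem_same 𝒜 hx,
          DirectSum.decompose_of_mem_same 𝒜 (hgraded w i x hx)]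
      · rw [DirectSum.decompose_of_mem_ne 𝒜 hx (Ne.symm hij),
          DirectSum.decompose_of_mem_ne 𝒜 (hgraded w j x hx) (Ne.symm hij), smul_zero]
  | add a b ha hb => rw [smul_add, DirectSum.decompose_add, DirectSum.decompose_add,
      DirectSum.add_apply, DirectSum.add_apply, AddSubgroup.coe_add, AddSubgroup.coe_add,
      smul_add, ha, hb]

theorem decompose_mem_fixed (hgraded : ∀ (w : W) (i : ℕ), ∀ x ∈ 𝒜 i, w • x ∈ 𝒜 i)
    {r : R} (hr : r ∈ fixedSubring W R) (i : ℕ) :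
    (DirectSum.decompose 𝒜 r i : R) ∈ fixedSubring W R := fun w => by
  rw [smul_decompose 𝒜 hgraded, hr w]

end Fixed

variable (S : Subring R) (hS : ∀ (r : R), r ∈ S → ∀ i, (DirectSum.decompose 𝒜 r i : R) ∈ S)

/-- Homogeneous projection inside a graded subring. -/
noncomputable def pS (i : ℕ) (s : S) : S := ⟨DirectSum.decompose 𝒜 (s : R) i, hS s s.2 i⟩

theorem pS_coe (i : ℕ) (s : S) : (pS 𝒜 S hS i s : R) = DirectSum.decompose 𝒜 (s : R) i := rfl

theorem pS_mem (i : ℕ) (s : S) : (pS 𝒜 S hS i s : R) ∈ 𝒜 i := SetLike.coe_mem _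

theorem sum_pS (s : S) :
    ∑ i ∈ DFinsupp.support (DirectSum.decompose 𝒜 (s : R)), pS 𝒜 S hS i s = s := by
  apply Subtype.ext
  push_cast [pS_coe]
  exact DirectSum.sum_support_decompose 𝒜 (s : R)

variable {M : Type*} [AddCommGroup M] [Module S M]
variable (ℳ : ℕ → AddSubgroup M) [DirectSum.Decomposition ℳ]
variable (hMsmul : ∀ i j : ℕ, ∀ r : S, (r : R) ∈ 𝒜 i → ∀ m ∈ ℳ j, r • m ∈ ℳ (i + j))

theorem sum_cM (u : M) :
    ∑ j ∈ DFinsupp.support (DirectSum.decompose ℳ u), (DirectSum.decompose ℳ u j : M) = u :=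
  DirectSum.sum_support_decompose ℳ u

include hMsmul in
/-- Core computation: the degree-`j` component of `s • u` lies in any submodule containing
the relevant products of components. -/
theorem decompose_smul_mem (s : S) (u : M) (j : ℕ) (N : Submodule S M)
    (h : ∀ i j', i + j' = j →
      (pS 𝒜 S hS i s) • (DirectSum.decompose ℳ u j' : M) ∈ N) :
    (DirectSum.decompose ℳ (s • u) j : M) ∈ N := by
  have hsu : s • u = ∑ i ∈ DFinsupp.support (DirectSum.decompose 𝒜 (s : R)),
      ∑ j' ∈ DFinsupp.support (DirectSum.decompose ℳ u),
        (pS 𝒜 S hS i s) • (DirectSum.decompose ℳ u j' : M) := by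
    conv_lhs => rw [← sum_pS 𝒜 S hS s, ← sum_cM ℳ u]
    rw [Finset.sum_smul]
    exact Finset.sum_congr rfl fun i _ => Finset.smul_sum
  rw [hsu]
  rw [DirectSum.decompose_sum]
  rw [DFinsupp.finset_sum_apply, AddSubmonoidClass.coe_finset_sum]
  refine Submodule.sum_mem N fun i _ => ?_
  rw [DirectSum.decompose_sum, DFinsupp.finset_sum_apply, AddSubmonoidClass.coe_finset_sum]
  refine Submodule.sum_mem N fun j' _ => ?_
  have hmem : (pS 𝒜 S hS i s) • (DirectSum.decompose ℳ u j' : M) ∈ ℳ (i + j') :=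
    hMsmul i j' _ (pS_mem 𝒜 S hS i s) _ (SetLike.coe_mem _)
  rcases eq_or_ne (i + j') j with hij | hij
  · subst hij
    rw [DirectSum.decompose_of_mem_same ℳ hmem]
    exact h i j' rfl
  · rw [DirectSum.decompose_of_mem_ne ℳ hmem hij]
    exact N.zero_mem

include hS hMsmul in
theorem span_homogeneous_graded {ι : Type*} (d : ι → ℕ) (m : ι → M)
    (hm : ∀ t, m t ∈ ℳ (d t)) :
    ∀ x ∈ Submodule.span S (Set.range m), ∀ j,
      (DirectSum.decompose ℳ x j : M) ∈ Submodule.span S (Set.range m) := by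
  intro x hx
  induction hx using Submodule.span_induction with
  | mem x hx =>
      obtain ⟨t, rfl⟩ := hx
      intro j
      rcases eq_or_ne j (d t) with rfl | hj
      · rw [DirectSum.decompose_of_mem_same ℳ (hm t)]
        exact Submodule.subset_span ⟨t, rfl⟩
      · rw [DirectSum.decompose_of_mem_ne ℳ (hm t) (Ne.symm hj)]
        exact Submodule.zero_mem _
  | zero => intro j; rw [DirectSum.decompose_zero]; simp
  | add a b _ _ ha hb =>
      intro j
      rw [DirectSum.decompose_add, DirectSum.add_apply, AddSubgroup.coe_add]
      exact Submodule.add_mem _ (ha j) (hb j)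
  | smul s x _ hx =>
      intro j
      exact decompose_smul_mem 𝒜 S hS ℳ hMsmul s x j _
        (fun i j' _ => Submodule.smul_mem _ _ (hx j'))

/-- The "irrelevant" ideal of `S`: elements whose degree-zero component vanishes. -/
noncomputable def posIdeal : Ideal S :=
  RingHom.ker ((GradedRing.projZeroRingHom 𝒜).comp (Subring.subtype S))

theorem mem_posIdeal_iff (s : S) :
    s ∈ posIdeal 𝒜 S ↔ (DirectSum.decompose 𝒜 (s : R) 0 : R) = 0 := Iff.rfl

include hS hMsmul in
/-- Graded Nakayama: a graded submodule which spans modulo `S₊ • M` is everything. -/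
theorem graded_nakayama (N : Submodule S M)
    (hNgr : ∀ x ∈ N, ∀ j, (DirectSum.decompose ℳ x j : M) ∈ N)
    (hle : N ⊔ (posIdeal 𝒜 S) • (⊤ : Submodule S M) = ⊤) : N = ⊤ := by
  have key : ∀ j, ∀ x ∈ ℳ j, x ∈ N := by
    intro j
    induction j using Nat.strong_induction_on with
    | _ j IH =>
      intro x hxj
      have hx : x ∈ N ⊔ (posIdeal 𝒜 S) • (⊤ : Submodule S M) := by rw [hle]; trivial
      obtain ⟨y, hy, z, hz, rfl⟩ := Submodule.mem_sup.mp hx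
      have hdec : (DirectSum.decompose ℳ (y + z) j : M) = y + z :=
        DirectSum.decompose_of_mem_same ℳ hxj
      rw [← hdec, DirectSum.decompose_add, DirectSum.add_apply, AddSubgroup.coe_add]
      refine Submodule.add_mem _ (hNgr y hy j) ?_
      clear hdec hxj hx
      refine Submodule.smul_induction_on hz (fun s hs u _ => ?_) (fun a b ha hb => ?_)
      · refine decompose_smul_mem 𝒜 S hS ℳ hMsmul s u j _ (fun i j' hij' => ?_)
        rcases Nat.eq_zero_or_pos i with rfl | hi
        · have h0 : pS 𝒜 S hS 0 s = 0 := Subtype.ext ((mem_posIdeal_iff 𝒜 S s).mp hs)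
          rw [h0, zero_smul]; exact Submodule.zero_mem _
        · have hj' : j' < j := by omega
          exact Submodule.smul_mem _ _ (IH j' hj' _ (SetLike.coe_mem _))
      · rw [DirectSum.decompose_add, DirectSum.add_apply, AddSubgroup.coe_add]
        exact Submodule.add_mem _ ha hb
  rw [eq_top_iff]
  intro x _
  rw [← sum_cM ℳ x]
  exact Submodule.sum_mem N fun j _ => key j _ (SetLike.coe_mem _)

/-- The ideal of elements of `R` with vanishing degree-zero component. -/
noncomputable def irrIdeal : Ideal R := RingHom.ker (GradedRing.projZeroRingHom 𝒜)

theorem mem_irrIdeal_iff (r : R) :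
    r ∈ irrIdeal 𝒜 ↔ (DirectSum.decompose 𝒜 r 0 : R) = 0 := Iff.rfl

theorem decompose_eq_zero_of_mem_pow (q : ℕ) (r : R) (hr : r ∈ (irrIdeal 𝒜) ^ q) :
    ∀ i < q, (DirectSum.decompose 𝒜 r i : R) = 0 := by
  induction q generalizing r with
  | zero => intro i hi; omega
  | succ q IH =>
      rw [pow_succ] at hr
      refine Submodule.mul_induction_on hr (fun a ha c hc => ?_) (fun x y hx hy => ?_)
      · intro i hi
        have hac : a * c = ∑ p ∈ DFinsupp.support (DirectSum.decompose 𝒜 a),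
            ∑ l ∈ DFinsupp.support (DirectSum.decompose 𝒜 c),
              (DirectSum.decompose 𝒜 a p : R) * (DirectSum.decompose 𝒜 c l : R) := by
          rw [← Finset.sum_mul_sum, DirectSum.sum_support_decompose 𝒜 a,
            DirectSum.sum_support_decompose 𝒜 c]
        rw [hac, DirectSum.decompose_sum, DFinsupp.finset_sum_apply,
          AddSubmonoidClass.coe_finset_sum]
        refine Finset.sum_eq_zero fun p _ => ?_
        rw [DirectSum.decompose_sum, DFinsupp.finset_sum_apply,
          AddSubmonoidClass.coe_finset_sum]
        refine Finset.sum_eq_zero fun l hl => ?_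
        rcases lt_or_ge p q with hp | hp
        · rw [IH a ha p hp, zero_mul, DirectSum.decompose_zero]; rfl
        · rcases Nat.eq_zero_or_pos l with rfl | hlpos
          · rw [(mem_irrIdeal_iff 𝒜 c).mp hc, mul_zero, DirectSum.decompose_zero]; rfl
          · have hmem : (DirectSum.decompose 𝒜 a p : R) * (DirectSum.decompose 𝒜 c l : R)
                ∈ 𝒜 (p + l) := SetLike.mul_mem_graded (SetLike.coe_mem _) (SetLike.coe_mem _)
            rw [DirectSum.decompose_of_mem_ne 𝒜 hmem (by omega)]
      · intro i hi
        rw [DirectSum.decompose_add, DirectSum.add_apply, AddSubgroup.coe_add,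
          hx i hi, hy i hi, add_zero]

theorem mem_posIdeal_of_coe {s : S} (h : s ∈ posIdeal 𝒜 S) : (s : R) ∈ irrIdeal 𝒜 := h

set_option maxHeartbeats 1600000 in
set_option synthInstance.maxHeartbeats 400000 in
include hS hMsmul in
theorem free_of_graded [Module.Finite S M]
    (hinv : ∀ s : S, (s : R) ∈ 𝒜 0 → s ≠ 0 → ∃ y : S, s * y = 1)
    (hbase : Module.Free R (R ⊗[S] M)) : Module.Free S M := by
  classical
  -- Step 1: a finite homogeneous generating family exists
  have hex : ∃ n : ℕ, ∃ (m : Fin n → M) (d : Fin n → ℕ),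
      (∀ t, m t ∈ ℳ (d t)) ∧ Submodule.span S (Set.range m) = ⊤ := by
    obtain ⟨n0, s, hs⟩ := Module.Finite.exists_fin (R := S) (M := M)
    set B : ℕ := (Finset.univ.sup
      (fun i : Fin n0 => (DFinsupp.support (DirectSum.decompose ℳ (s i))).sup id)) + 1 with hB
    have hsupp : ∀ i : Fin n0, ∀ j ∈ DFinsupp.support (DirectSum.decompose ℳ (s i)), j < B := by
      intro i j hj
      have h1 : j ≤ (DFinsupp.support (DirectSum.decompose ℳ (s i))).sup id :=
        Finset.le_sup (f := id) hj
      have h2 : (DFinsupp.support (DirectSum.decompose ℳ (s i))).sup id ≤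
          Finset.univ.sup (fun i : Fin n0 =>
            (DFinsupp.support (DirectSum.decompose ℳ (s i))).sup id) :=
        Finset.le_sup (f := fun i : Fin n0 =>
          (DFinsupp.support (DirectSum.decompose ℳ (s i))).sup id) (Finset.mem_univ i)
      omega
    set g : Fin n0 × Fin B → M := fun p => (DirectSum.decompose ℳ (s p.1) p.2 : M) with hg
    have hgspan : Submodule.span S (Set.range g) = ⊤ := by
      rw [eq_top_iff, ← hs, Submodule.span_le]
      rintro _ ⟨i, rfl⟩
      rw [← sum_cM ℳ (s i)]
      refine Submodule.sum_mem _ fun j hj => ?_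
      exact Submodule.subset_span ⟨(i, ⟨j, hsupp i j hj⟩), rfl⟩
    refine ⟨n0 * B, g ∘ (finProdFinEquiv (m := n0) (n := B)).symm,
      (fun p => (p.2 : ℕ)) ∘ (finProdFinEquiv (m := n0) (n := B)).symm,
      fun t => SetLike.coe_mem _, ?_⟩
    rw [Function.Surjective.range_comp (finProdFinEquiv).symm.surjective g]
    exact hgspan
  -- minimal size
  obtain ⟨n, hspec, hmin⟩ : ∃ n : ℕ, (∃ (m : Fin n → M) (d : Fin n → ℕ),
      (∀ t, m t ∈ ℳ (d t)) ∧ Submodule.span S (Set.range m) = ⊤) ∧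
      ∀ k < n, ¬ (∃ (m : Fin k → M) (d : Fin k → ℕ),
        (∀ t, m t ∈ ℳ (d t)) ∧ Submodule.span S (Set.range m) = ⊤) :=
    ⟨Nat.find hex, Nat.find_spec hex, fun k hk => Nat.find_min hex hk⟩
  clear hex
  obtain ⟨m, d, hm, hspan⟩ := hspec
  -- Step 2: independence modulo the irrelevant ideal
  have hindep : ∀ a : Fin n → S, (∑ t, a t • m t) = 0 → ∀ t, a t ∈ posIdeal 𝒜 S := by
    intro a ha
    by_contra hcon
    push_neg at hcon
    obtain ⟨t₀, ht₀⟩ := hcon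
    set c : S := pS 𝒜 S hS 0 (a t₀) with hc
    have hcne : c ≠ 0 := by
      intro h
      exact ht₀ ((mem_posIdeal_iff 𝒜 S _).mpr (congrArg (Subtype.val) h))
    obtain ⟨yS, hcy⟩ := hinv c (pS_mem 𝒜 S hS 0 (a t₀)) hcne
    -- reindexing: n = n' + 1
    have hnpos : 0 < n := Fin.pos t₀
    set n' := n - 1 with hn'
    have hsucc : n' + 1 = n := by omega
    set sA : Fin n' → Fin n := fun t => Fin.cast hsucc ((Fin.cast hsucc.symm t₀).succAbove t)
      with hsA
    have hsum : ∀ (f : Fin n → M), ∑ t, f t = f t₀ + ∑ z, f (sA z) := by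
      intro f
      rw [← Equiv.sum_comp (finCongr hsucc) f]
      rw [Fin.sum_univ_succAbove (fun t => f (finCongr hsucc t)) (Fin.cast hsucc.symm t₀)]
      congr 1
    have hcover : ∀ t : Fin n, t ≠ t₀ → ∃ z, sA z = t := by
      intro t ht
      have hne : (Fin.cast hsucc.symm t) ≠ (Fin.cast hsucc.symm t₀) := by
        intro h; exact ht (by simpa using congrArg (Fin.cast hsucc) h)
      obtain ⟨z, hz⟩ := Fin.exists_succAbove_eq hne
      refine ⟨z, ?_⟩
      show Fin.cast hsucc ((Fin.cast hsucc.symm t₀).succAbove z) = t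
      rw [hz]
      exact Fin.ext (by simp)
    set N : Submodule S M := Submodule.span S (Set.range (m ∘ sA)) with hN
    have hNtop : N = ⊤ := by
      refine graded_nakayama 𝒜 S hS ℳ hMsmul N
        (span_homogeneous_graded 𝒜 S hS ℳ hMsmul (d ∘ sA) (m ∘ sA) (fun z => hm (sA z))) ?_
      rw [eq_top_iff, ← hspan, Submodule.span_le]
      rintro _ ⟨t, rfl⟩
      rw [SetLike.mem_coe]
      rcases eq_or_ne t t₀ with rfl | ht
      · -- the key computation
        have hrw : a t • m t = - ∑ z, a (sA z) • m (sA z) := by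
          have := hsum (fun t' => a t' • m t')
          rw [ha] at this
          rw [eq_neg_iff_add_eq_zero]
          exact this.symm
        have hmid : c • m t = a t • m t - (a t - c) • m t := by
          rw [sub_smul]; abel
        have hmt : m t = yS • (a t • m t) - yS • ((a t - c) • m t) := by
          calc m t = (1 : S) • m t := (one_smul _ _).symm
          _ = (c * yS) • m t := by rw [hcy]
          _ = yS • (c • m t) := by rw [mul_comm, mul_smul]
          _ = yS • (a t • m t - (a t - c) • m t) := by rw [← hmid]
          _ = yS • (a t • m t) - yS • ((a t - c) • m t) := smul_sub _ _ _
        rw [hmt, hrw]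
        refine Submodule.sub_mem _ ?_ ?_
        · refine Submodule.mem_sup_left ?_
          rw [smul_neg]
          refine Submodule.neg_mem _ (Submodule.smul_mem _ _ (Submodule.sum_mem _ ?_))
          intro z _
          exact Submodule.smul_mem _ _ (Submodule.subset_span ⟨z, rfl⟩)
        · refine Submodule.mem_sup_right ?_
          rw [← mul_smul]
          have hmem : (a t - c) ∈ posIdeal 𝒜 S := by
            rw [mem_posIdeal_iff]
            have h1 : ((a t - c : S) : R) = (a t : R) - (c : R) := rfl
            rw [h1, DirectSum.decompose_sub, DirectSum.sub_apply, AddSubgroup.coe_sub]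
            have h2 : (DirectSum.decompose 𝒜 ((c : S) : R) 0 : R) = (c : R) :=
              DirectSum.decompose_of_mem_same 𝒜 (pS_mem 𝒜 S hS 0 (a t))
            rw [h2, hc, pS_coe, sub_eq_zero]
          have hmul : yS * (a t - c) ∈ posIdeal 𝒜 S := Ideal.mul_mem_left _ yS hmem
          exact Submodule.smul_mem_smul hmul (Submodule.subset_span ⟨t, rfl⟩)
      · obtain ⟨z, rfl⟩ := hcover t ht
        exact Submodule.mem_sup_left (Submodule.subset_span ⟨z, rfl⟩)
    -- contradiction with minimality
    exact hmin n' (by omega) ⟨m ∘ sA, d ∘ sA, fun z => hm (sA z), by rw [← hN, hNtop]⟩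
  -- Step 3: the linear map and its surjectivity
  let φ : (Fin n → S) →ₗ[S] M :=
    { toFun := fun a => ∑ t, a t • m t
      map_add' := fun a b => by simp [add_smul, Finset.sum_add_distrib]
      map_smul' := fun r a => by simp [Finset.smul_sum, mul_smul, smul_eq_mul] }
  have hφapply : ∀ a, φ a = ∑ t, a t • m t := fun a => rfl
  have hφsurj : Function.Surjective φ := by
    have hrange : Submodule.span S (Set.range m) ≤ LinearMap.range φ := by
      rw [Submodule.span_le]
      rintro _ ⟨t, rfl⟩
      refine ⟨Pi.single t 1, ?_⟩
      rw [hφapply]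
      rw [Finset.sum_eq_single t]
      · simp
      · intro t' _ ht'; simp [Pi.single_apply, ht']
      · intro h; exact absurd (Finset.mem_univ t) h
    intro x
    have hx : x ∈ Submodule.span S (Set.range m) := by rw [hspan]; trivial
    exact hrange hx
  -- Step 4: base change
  let V := R ⊗[S] (Fin n → S)
  let φR : V →ₗ[R] (R ⊗[S] M) := φ.baseChange R
  have hφRsurj : Function.Surjective φR := by
    intro p
    induction p using TensorProduct.induction_on with
    | zero => exact ⟨0, map_zero _⟩
    | tmul r x =>
        obtain ⟨v, rfl⟩ := hφsurj x
        exact ⟨r ⊗ₜ v, LinearMap.baseChange_tmul _ _ _⟩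
    | add x y hx hy =>
        obtain ⟨v1, rfl⟩ := hx
        obtain ⟨v2, rfl⟩ := hy
        exact ⟨v1 + v2, map_add _ _ _⟩
  haveI := hbase
  obtain ⟨σ, hσ⟩ := Module.projective_lifting_property φR LinearMap.id hφRsurj
  set J : Ideal R := irrIdeal 𝒜 with hJ
  have hkerJ : LinearMap.ker φR ≤ J • (⊤ : Submodule R V) := by
    intro v hv
    have hexact := lTensor_exact (R := S) R (LinearMap.exact_subtype_ker_map φ) hφsurj
    have hfun : ⇑φR = ⇑(LinearMap.lTensor R φ) := LinearMap.baseChange_eq_ltensor φ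
    have hv' : (LinearMap.lTensor R φ) v = 0 := by
      rw [← hfun]; exact hv
    obtain ⟨w, hw⟩ := (hexact v).mp hv'
    rw [← hw]
    clear hw hv hv'
    induction w using TensorProduct.induction_on with
    | zero => rw [map_zero]; exact Submodule.zero_mem _
    | tmul r k =>
        rcases k with ⟨a, hak⟩
        rw [LinearMap.lTensor_tmul]
        have hk : ∀ t, a t ∈ posIdeal 𝒜 S := hindep a hak
        have hksum : ((LinearMap.ker φ).subtype ⟨a, hak⟩ : Fin n → S) =
            ∑ t, a t • (Pi.single t (1 : S) : Fin n → S) := by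
          rw [Submodule.subtype_apply]
          funext t'
          rw [Finset.sum_apply, Finset.sum_eq_single t']
          · simp
          · intro t _ ht; simp [Pi.single_apply, ht]
          · intro h; exact absurd (Finset.mem_univ t') h
        rw [hksum, TensorProduct.tmul_sum]
        refine Submodule.sum_mem _ fun t _ => ?_
        rw [TensorProduct.tmul_smul, ← algebraMap_smul (A := R) (M := V)]
        exact Submodule.smul_mem_smul (hk t) Submodule.mem_top
    | add x y hx hy => rw [map_add]; exact Submodule.add_mem _ hx hy
  have hrange_e : ∀ v : V, v - σ (φR v) ∈ LinearMap.ker φR := by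
    intro v
    rw [LinearMap.mem_ker, map_sub]
    have hid : φR (σ (φR v)) = φR v := LinearMap.ext_iff.mp hσ (φR v)
    rw [hid, sub_self]
  have hpow : ∀ q : ℕ, LinearMap.ker φR ≤ (J ^ q) • (⊤ : Submodule R V) := by
    intro q
    induction q with
    | zero =>
        rw [pow_zero, Ideal.one_eq_top, Submodule.top_smul]
        exact le_top
    | succ q IH =>
        intro v hv
        have hv0 : φR v = 0 := hv
        set e : V →ₗ[R] V := LinearMap.id - σ ∘ₗ φR with he
        have heapp : ∀ u, e u = u - σ (φR u) := fun u => rfl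
        have h1 : v ∈ Submodule.map e ((J ^ q) • (⊤ : Submodule R V)) :=
          ⟨v, IH hv, by rw [heapp, hv0, map_zero, sub_zero]⟩
        rw [Submodule.map_smul''] at h1
        have h2 : (J ^ q) • (Submodule.map e (⊤ : Submodule R V)) ≤
            (J ^ q) • (J • (⊤ : Submodule R V)) := by
          refine Submodule.smul_mono le_rfl ?_
          rintro _ ⟨u, -, rfl⟩
          exact hkerJ (hrange_e u)
        have h3 := h2 h1
        rwa [← Submodule.smul_assoc, Ideal.smul_eq_mul, ← pow_succ] at h3
  -- coordinates via the base-changed basis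
  let b : Module.Basis (Fin n) R V := (Pi.basisFun S (Fin n)).baseChange R
  have hcoord : ∀ (I' : Ideal R) (v : V), v ∈ I' • (⊤ : Submodule R V) →
      ∀ t, b.repr v t ∈ I' := by
    intro I' v hv
    refine Submodule.smul_induction_on hv (fun r hr u _ t => ?_) (fun x y hx hy t => ?_)
    · rw [map_smul, Finsupp.smul_apply, smul_eq_mul]
      exact Ideal.mul_mem_right _ _ hr
    · rw [map_add, Finsupp.add_apply]
      exact Submodule.add_mem _ (hx t) (hy t)
  have hφRinj : Function.Injective φR := by
    rw [← LinearMap.ker_eq_bot, eq_bot_iff]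
    intro v hv
    have hz : ∀ t, b.repr v t = 0 := by
      intro t
      have hcomp : ∀ i, (DirectSum.decompose 𝒜 (b.repr v t) i : R) = 0 := fun i =>
        decompose_eq_zero_of_mem_pow 𝒜 (i + 1) _
          (hcoord (J ^ (i + 1)) v (hpow (i + 1) hv) t) i (Nat.lt_succ_self i)
      have hsum := DirectSum.sum_support_decompose 𝒜 (b.repr v t)
      rw [← hsum]
      exact Finset.sum_eq_zero fun i _ => hcomp i
    have hrepr0 : b.repr v = 0 := Finsupp.ext hz
    have : v = 0 := by
      have := congrArg b.repr.symm hrepr0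
      rwa [LinearEquiv.symm_apply_apply, map_zero] at this
    simp [this]
  have hφinj : Function.Injective φ := by
    intro a a' haa'
    have h0 : φ (a - a') = 0 := by rw [map_sub, haa', sub_self]
    have h1 : φR ((1 : R) ⊗ₜ (a - a')) = 0 := by
      rw [show φR ((1 : R) ⊗ₜ (a - a')) = (1 : R) ⊗ₜ (φ (a - a')) from
        LinearMap.baseChange_tmul _ _ _, h0, TensorProduct.tmul_zero]
    have h2 : ((1 : R) ⊗ₜ (a - a') : V) = 0 := by
      apply hφRinj
      rw [h1, map_zero]
    have h3 : ∀ t, (((a - a') t : S) : R) = 0 := by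
      intro t
      have h4 := Module.Basis.baseChange_repr_tmul (R := S) R (Pi.basisFun S (Fin n)) (1 : R)
        (a - a') t
      rw [h2, map_zero, Finsupp.zero_apply] at h4
      have h5 : (Pi.basisFun S (Fin n)).repr (a - a') t = (a - a') t := by
        simp [Pi.basisFun_repr]
      rw [h5] at h4
      have h6 : ((a - a') t) • (1 : R) = (((a - a') t : S) : R) := by
        rw [Algebra.smul_def, mul_one]
        rfl
      rw [h6] at h4
      exact h4.symm
    have h7 : a - a' = 0 := by
      funext t
      exact Subtype.ext (h3 t)
    exact sub_eq_zero.mp h7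
  exact Module.Free.of_equiv (LinearEquiv.ofBijective φ ⟨hφinj, hφsurj⟩)

end Aux

set_option maxHeartbeats 800000 in
/-- Descent of freeness along the inclusion `R^W ⊆ R`: let `R` be an `ℕ`-graded
commutative ring with `R₀` a field, `W` a finite group acting on `R` by graded ring
automorphisms, with `R` free over the invariant ring `R^W`.  If `M` is a finitely
generated graded `R^W`-module such that `M ⊗_{R^W} R` is a free `R`-module, then `M`
is a free `R^W`-module. -/
theorem free_descent
    (R : Type*) [CommRing R] (𝒜 : ℕ → AddSubgroup R) [GradedRing 𝒜]
    (hfield : ∀ x ∈ 𝒜 0, x ≠ 0 → ∃ y ∈ 𝒜 0, x * y = 1)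
    (W : Type*) [Group W] [Finite W] [MulSemiringAction W R]
    (hgraded : ∀ (w : W) (i : ℕ), ∀ x ∈ 𝒜 i, w • x ∈ 𝒜 i)
    (hRfree : Module.Free (fixedSubring W R) R)
    (M : Type*) [AddCommGroup M] [Module (fixedSubring W R) M]
    [Module.Finite (fixedSubring W R) M]
    (ℳ : ℕ → AddSubgroup M) [DirectSum.Decomposition ℳ]
    (hMsmul : ∀ i j : ℕ, ∀ r : fixedSubring W R, (r : R) ∈ 𝒜 i →
      ∀ m ∈ ℳ j, r • m ∈ ℳ (i + j))
    (hbase : Module.Free R (R ⊗[fixedSubring W R] M)) :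
    Module.Free (fixedSubring W R) M := by
  refine free_of_graded 𝒜 (fixedSubring W R)
    (fun r hr i => decompose_mem_fixed 𝒜 hgraded hr i) ℳ hMsmul ?_ hbase
  intro s hs hsne
  obtain ⟨y, hy0, hsy⟩ := hfield (s : R) hs (fun h => hsne (Subtype.ext h))
  have hyfix : y ∈ fixedSubring W R := by
    intro w
    have h1 : (s : R) * (w • y) = 1 := by
      have := congrArg (fun z => w • z) hsy
      simpa [smul_mul', s.2 w] using this
    calc w • y = ((s : R) * y) * (w • y) := by rw [hsy, one_mul]
    _ = y * ((s : R) * (w • y)) := by ring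
    _ = y := by rw [h1, mul_one]
  exact ⟨⟨y, hyfix⟩, Subtype.ext hsy⟩

end Stmt15
end

section
/- Let R be a commutative ring and M an R-module which is finitely generated and torsion-free over an integral domain R. Suppose i : N → M is an R-linear map, F ⊂ R a multiplicative set with 0 ∉ F, such that the localized map i_F : N_F → M_F is an isomorphism, and suppose the composite K_T : P → Hom_R(M, R) is an isomorphism and K'_T : P' → Hom_R(N, R) is an isomorphism, with a commutative square relating P → P' to the transposes. If M and N are finitely generated, then the induced map P → P' becomes an isomorphism after localizing at F, and P → P' is injective. -/
/-- Abstract form of the localization theorem for equivariant Kronecker duality schemes: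
over a domain `R`, suppose `i : N → M` is a map of finitely generated modules which
becomes an isomorphism after localization at a multiplicative set `F` with `0 ∉ F`,
and suppose `P` and `P'` are identified, via Kronecker duality isomorphisms `K`, `K'`,
with `Hom_R(M,R)` and `Hom_R(N,R)` in such a way that `g : P → P'` corresponds to the
transpose of `i`.  Then `g` becomes an isomorphism after localization at `F`, and `g`
is injective. -/
theorem kronecker_localization
    (R : Type*) [CommRing R] [IsDomain R]
    (M N P P' : Type*)
    [AddCommGroup M] [Module R M] [AddCommGroup N] [Module R N]
    [AddCommGroup P] [Module R P] [AddCommGroup P'] [Module R P']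
    [Module.Finite R M] [Module.Finite R N]
    (i : N →ₗ[R] M) (F : Submonoid R) (h0 : (0 : R) ∉ F)
    (hloc : Function.Bijective (LocalizedModule.map F i))
    (K : P ≃ₗ[R] (M →ₗ[R] R)) (K' : P' ≃ₗ[R] (N →ₗ[R] R))
    (g : P →ₗ[R] P')
    (hsq : ∀ p : P, K' (g p) = (K p).comp i) :
    Function.Bijective (LocalizedModule.map F g) ∧ Function.Injective g := by
  classical
  have hFne : ∀ c : F, (c : R) ≠ 0 := fun c hc => h0 (hc ▸ c.2)
  -- Step A: the cokernel of `i` is `F`-torsion.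
  have stepA : ∀ m : M, ∃ (c : F) (n : N), i n = (c : R) • m := by
    intro m
    obtain ⟨x, hx⟩ := hloc.2 (LocalizedModule.mk m 1)
    obtain ⟨n, t, rfl⟩ : ∃ n t, x = LocalizedModule.mk n t := by
      induction x using LocalizedModule.induction_on with
      | _ n t => exact ⟨n, t, rfl⟩
    rw [LocalizedModule.map_mk, LocalizedModule.mk_eq] at hx
    obtain ⟨u, hu⟩ := hx
    refine ⟨u * t, (u : R) • n, ?_⟩
    have hu' : (u : R) • (1 : R) • i n = (u : R) • (t : R) • m := by
      simpa [Submonoid.smul_def] using hu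
    rw [map_smul]
    simpa [one_smul, mul_smul] using hu'
  -- Step B: the kernel of `i` is `F`-torsion.
  have stepB : ∀ n : N, i n = 0 → ∃ c : F, (c : R) • n = 0 := by
    intro n hn
    have hz : LocalizedModule.map F i (LocalizedModule.mk n 1) = 0 := by
      rw [LocalizedModule.map_mk, hn, LocalizedModule.zero_mk]
    have h1 : LocalizedModule.mk n (1 : F) = 0 := hloc.1 (by rw [hz, map_zero])
    rw [← LocalizedModule.zero_mk (1 : F), LocalizedModule.mk_eq] at h1
    obtain ⟨u, hu⟩ := h1
    exact ⟨u, by simpa [Submonoid.smul_def] using hu⟩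
  -- `g` is injective.
  have hginj : Function.Injective g := by
    intro p q hpq
    have h1 : (K p).comp i = (K q).comp i := by rw [← hsq, ← hsq, hpq]
    have h2 : K p = K q := by
      ext m
      obtain ⟨c, n, hn⟩ := stepA m
      have h3 := LinearMap.congr_fun h1 n
      simp only [LinearMap.comp_apply, hn, map_smul, smul_eq_mul] at h3
      exact mul_left_cancel₀ (hFne c) h3
    exact K.injective h2
  -- a single `s ∈ F` moving all of `M` into the range of `i`.
  obtain ⟨S, hS⟩ := (Module.Finite.fg_top : (⊤ : Submodule R M).FG)
  choose c n hcn using stepA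
  set s : F := ∏ m ∈ S, c m with hs
  have hsM : ∀ m : M, ∃ nm : N, i nm = (s : R) • m := by
    have hsub : Submodule.span R (S : Set M) ≤
        (LinearMap.range i).comap (LinearMap.lsmul R M (s : R)) := by
      rw [Submodule.span_le]
      intro m hm
      simp only [Submodule.mem_comap, LinearMap.lsmul_apply, SetLike.mem_coe]
      have hsplit : (s : R) = (c m : R) * ((∏ x ∈ S.erase m, c x : F) : R) := by
        rw [hs, ← Submonoid.coe_mul, Finset.mul_prod_erase S c hm]
      refine ⟨((∏ x ∈ S.erase m, c x : F) : R) • n m, ?_⟩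
      rw [map_smul, hcn m, hsplit, ← mul_smul, mul_comm]
    intro m
    have hm : m ∈ Submodule.span R (S : Set M) := by rw [hS]; trivial
    exact hsub hm
  -- Step C: every `ψ : N →ₗ R` extends to `M` after multiplying by `s`.
  have stepC : ∀ ψ : N →ₗ[R] R, ∃ φ : M →ₗ[R] R, φ.comp i = (s : R) • ψ := by
    intro ψ
    have hker : LinearMap.ker i ≤ LinearMap.ker ψ := by
      intro n0 hn0
      obtain ⟨u, hu⟩ := stepB n0 (by simpa using hn0)
      have h4 : (u : R) * ψ n0 = 0 := by rw [← smul_eq_mul, ← map_smul, hu, map_zero]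
      have := (mul_eq_zero.mp h4).resolve_left (hFne u)
      simpa using this
    let ψ₀ := Submodule.liftQ (LinearMap.ker i) ψ hker
    choose nm hnm using hsM
    let μ : M →ₗ[R] LinearMap.range i :=
      LinearMap.codRestrict (LinearMap.range i) (LinearMap.lsmul R M (s : R))
        (fun m => ⟨nm m, hnm m⟩)
    refine ⟨ψ₀ ∘ₗ (LinearMap.quotKerEquivRange i).symm.toLinearMap ∘ₗ μ, ?_⟩
    ext n0
    simp only [LinearMap.comp_apply, LinearEquiv.coe_coe, LinearMap.smul_apply]
    have hμ : μ (i n0) = ⟨i ((s : R) • n0), LinearMap.mem_range_self i _⟩ := by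
      apply Subtype.ext
      simp [μ, map_smul]
      rfl
    rw [hμ, LinearMap.quotKerEquivRange_symm_apply_image i ((s : R) • n0)]
    simp [ψ₀, smul_eq_mul]
  -- Surjectivity of the localized map.
  have hsurj : Function.Surjective (LocalizedModule.map F g) := by
    intro y
    obtain ⟨p', t, rfl⟩ : ∃ p' t, y = LocalizedModule.mk p' t := by
      induction y using LocalizedModule.induction_on with
      | _ p' t => exact ⟨p', t, rfl⟩
    obtain ⟨φ, hφ⟩ := stepC (K' p')
    refine ⟨LocalizedModule.mk (K.symm φ) (s * t), ?_⟩
    rw [LocalizedModule.map_mk]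
    have hg : g (K.symm φ) = (s : R) • p' := by
      apply K'.injective
      rw [hsq, K.apply_symm_apply, hφ, map_smul]
    rw [hg, ← Submonoid.smul_def]
    exact LocalizedModule.mk_cancel_common_left s t p'
  exact ⟨⟨LocalizedModule.map_injective F g hginj, hsurj⟩, hginj⟩
end

section
/- Let k be an algebraically closed field, X an affine scheme of finite type over k with an action of a torus T, and H a closed subgroup of T. Then the ideal I ⊂ k[X] of the fixed point subscheme X^H equals the ideal J generated by all regular functions f ∈ k[X] that are T-eigenvectors whose weight restricts non-trivially to H. -/
open scoped Classical DirectSum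

noncomputable section

namespace Stmt18

variable {k : Type*} [Field k] {A : Type*} [CommRing A] [Algebra k A]
variable {Δ : Type*} [AddCommGroup Δ] [DecidableEq Δ]

/-- The action of a point `h` of the torus `T = Hom(Δ, kˣ)` on a `Δ`-graded algebra
`A` (the algebraic incarnation of a rational `T`-action): `h` scales the component of
weight `χ` by `h(χ)`. -/
def act (𝒜 : Δ → Submodule k A) [GradedAlgebra 𝒜]
    (h : Multiplicative Δ →* kˣ) (a : A) : A :=
  (DirectSum.decompose 𝒜 a).sum fun χ x => ((h (Multiplicative.ofAdd χ) : kˣ) : k) • (x : A)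


lemma act_of_mem (𝒜 : Δ → Submodule k A) [GradedAlgebra 𝒜]
    (h : Multiplicative Δ →* kˣ) {χ : Δ} {x : A} (hx : x ∈ 𝒜 χ) :
    act 𝒜 h x = ((h (Multiplicative.ofAdd χ) : kˣ) : k) • x := by
  unfold act
  rw [DirectSum.decompose_of_mem 𝒜 hx]
  rw [show (DirectSum.of (fun i => 𝒜 i) χ ⟨x, hx⟩ : ⨁ i, 𝒜 i)
      = DFinsupp.single χ ⟨x, hx⟩ from rfl]
  rw [DFinsupp.sum_single_index (by simp)]

lemma act_sub_self (𝒜 : Δ → Submodule k A) [GradedAlgebra 𝒜]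
    (h : Multiplicative Δ →* kˣ) (a : A) :
    act 𝒜 h a - a = ∑ χ ∈ (DirectSum.decompose 𝒜 a).support,
      ((((h (Multiplicative.ofAdd χ)) : kˣ) : k) - 1) • ((DirectSum.decompose 𝒜 a) χ : A) := by
  have ha := DirectSum.sum_support_decompose 𝒜 a
  rw [act, DFinsupp.sum]
  nth_rewrite 3 [← ha]
  rw [← Finset.sum_sub_distrib]
  exact Finset.sum_congr rfl fun χ _ => by rw [sub_smul, one_smul]

/-- Let `X` be an affine scheme of finite type over an algebraically closed field `k`
with an action of a torus `T` (encoded by the grading of `k[X] = A` over the character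
group `Δ` of `T`), and let `H` be a closed subgroup of `T` (a subgroup of the group of
`k`-points `Hom(Δ, kˣ)`).  Then the ideal of the fixed point subscheme `X^H` — the
smallest `H`-stable ideal of `A` with `H` acting trivially on the quotient — equals the
ideal generated by all `T`-eigenvectors whose weight restricts non-trivially to `H`. -/
theorem fixed_ideal_eq_span
    [IsAlgClosed k] [Algebra.FiniteType k A]
    (𝒜 : Δ → Submodule k A) [GradedAlgebra 𝒜]
    (H : Subgroup (Multiplicative Δ →* kˣ)) :
    sInf {I : Ideal A |
        (∀ h ∈ H, ∀ a ∈ I, act 𝒜 h a ∈ I) ∧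
        (∀ h ∈ H, ∀ a : A, act 𝒜 h a - a ∈ I)} =
      Ideal.span (⋃ χ ∈ {χ : Δ | ∃ h ∈ H, h (Multiplicative.ofAdd χ) ≠ 1},
        (𝒜 χ : Set A)) := by
  set J := Ideal.span (⋃ χ ∈ {χ : Δ | ∃ h ∈ H, h (Multiplicative.ofAdd χ) ≠ 1},
      (𝒜 χ : Set A)) with hJ
  have hsub : ∀ h ∈ H, ∀ a : A, act 𝒜 h a - a ∈ J := by
    intro h hH a
    rw [act_sub_self]
    refine Ideal.sum_mem _ fun χ _ => ?_
    by_cases hc : h (Multiplicative.ofAdd χ) = 1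
    · simp [hc]
    · refine Submodule.smul_of_tower_mem _ _ (Ideal.subset_span ?_)
      exact Set.mem_biUnion ⟨h, hH, hc⟩ ((DirectSum.decompose 𝒜 a) χ).2
  refine le_antisymm (sInf_le ⟨?_, hsub⟩) (le_sInf fun I hI => ?_)
  · intro h hH a ha
    have := hsub h hH a
    have : (act 𝒜 h a - a) + a ∈ J := J.add_mem this ha
    simpa using this
  · rw [Ideal.span_le]
    rintro x hx
    simp only [Set.mem_iUnion, SetLike.mem_coe, Set.mem_setOf_eq] at hx
    obtain ⟨χ, ⟨h, hH, hne⟩, hx⟩ := hx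
    have h2 := hI.2 h hH x
    rw [act_of_mem 𝒜 h hx] at h2
    have hc : ((h (Multiplicative.ofAdd χ) : kˣ) : k) - 1 ≠ 0 := by
      intro hc0
      exact hne (Units.ext (by push_cast; linear_combination hc0))
    have h3 : (((h (Multiplicative.ofAdd χ) : kˣ) : k) - 1) • x ∈ I := by
      rwa [sub_smul, one_smul]
    have := Submodule.smul_of_tower_mem I (((h (Multiplicative.ofAdd χ) : kˣ) : k) - 1)⁻¹ h3
    rwa [smul_smul, inv_mul_cancel₀ hc, one_smul] at this


end Stmt18
end
end
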